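/- Let n ≥ 1 be a natural number, let (a_k)_{k≥0} be a sequence of complex numbers, and let b_m = Σ_{k=0}^m C(m,k) a_k. Then: Σ_{k=1}^n C(n,k) a_k / (k + 1) = (1/(n+1)) · ( Σ_{m=1}^n b_m − n · b_0 ). -/
import Mathlib


open Finset

theorem stmt_4 (n : ℕ) (hn : 1 ≤ n) (a b : ℕ → ℂ)
    (hb : ∀ m, b m = ∑ k ∈ Finset.range (m + 1), (Nat.choose m k : ℂ) * a k) :
    ∑ k ∈ Finset.Icc 1 n, (Nat.choose n k : ℂ) * a k / ((k : ℂ) + 1) =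
      (1 / ((n : ℂ) + 1)) * ((∑ m ∈ Finset.Icc 1 n, b m) - (n : ℂ) * b 0) := by
  have hb0 : b 0 = a 0 := by simp [hb 0]
  -- double sum swap
  have hswap : ∑ m ∈ Finset.Icc 1 n, b m
      = ∑ k ∈ Finset.range (n + 1), ∑ m ∈ Finset.Icc (max k 1) n,
          (Nat.choose m k : ℂ) * a k := by
    simp only [hb]
    exact Finset.sum_comm' (by intro m k; simp [Nat.lt_succ_iff]; omega)
  have hrange : Finset.range (n + 1) = insert 0 (Finset.Icc 1 n) := by
    ext x; simp [Nat.lt_succ_iff]; omega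
  have hsum : ∑ m ∈ Finset.Icc 1 n, b m
      = (n : ℂ) * a 0 + ∑ k ∈ Finset.Icc 1 n, ((n + 1).choose (k + 1) : ℂ) * a k := by
    rw [hswap, hrange, Finset.sum_insert (by simp)]
    congr 1
    · simp [Finset.sum_const, Nat.card_Icc]
    · apply Finset.sum_congr rfl
      intro k hk
      simp only [Finset.mem_Icc] at hk
      rw [max_eq_left hk.1, ← Finset.sum_mul, ← Nat.cast_sum, Nat.sum_Icc_choose]
  have hterm : ∀ k ∈ Finset.Icc 1 n, (Nat.choose n k : ℂ) * a k / ((k : ℂ) + 1)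
      = (1 / ((n : ℂ) + 1)) * (((n + 1).choose (k + 1) : ℂ) * a k) := by
    intro k hk
    have h := Nat.add_one_mul_choose_eq n k
    have hc : ((n : ℂ) + 1) * (Nat.choose n k : ℂ)
        = ((n + 1).choose (k + 1) : ℂ) * ((k : ℂ) + 1) := by
      exact_mod_cast congrArg (Nat.cast (R := ℂ)) h
    have hk1 : ((k : ℂ) + 1) ≠ 0 := by
      exact Nat.cast_add_one_ne_zero k
    have hn1 : ((n : ℂ) + 1) ≠ 0 := by
      exact Nat.cast_add_one_ne_zero n
    field_simp
    ring_nf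
    ring_nf at hc
    linear_combination a k * hc
  rw [Finset.sum_congr rfl hterm, hsum, hb0, ← Finset.mul_sum]
  ring
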